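/- Let m ≥ 1 be an integer, let δ > 0, and let h ∈ ℤ^m have all coordinates h_i ≥ 1. Then ∫_{[0,1]^m} (‖⟨h,β⟩‖ · |log ‖⟨h,β⟩‖|^{1+δ})^{−1} dβ ≤ 2m·δ^{−1}·(log 2)^{−δ}. -/

import Mathlib

open MeasureTheory

noncomputable section

/-- `‖x‖`: the distance from the real number `x` to the nearest integer. -/
def distToInt (x : ℝ) : ℝ := |x - round x|

open Set Real ENNReal

lemma measurable_round' : Measurable (fun x : ℝ => (round x : ℝ)) := by
  have : (fun x : ℝ => (round x : ℝ)) = fun x : ℝ => ((⌊x + 1/2⌋ : ℤ) : ℝ) := by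
    funext x; rw [round_eq]
  rw [this]
  exact measurable_from_top.comp (Int.measurable_floor.comp (measurable_id.add_const _))

lemma measurable_distToInt : Measurable distToInt :=
  (measurable_id.sub measurable_round').abs

lemma distToInt_nonneg (x : ℝ) : 0 ≤ distToInt x := abs_nonneg _

lemma distToInt_add_int (x : ℝ) (n : ℤ) : distToInt (x + n) = distToInt x := by
  unfold distToInt
  rw [round_add_intCast]
  push_cast
  ring_nf

lemma distToInt_eq_self {x : ℝ} (h0 : 0 ≤ x) (h1 : x ≤ 1/2) : distToInt x = x := by
  rcases lt_or_eq_of_le h1 with h | h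
  · have : round x = 0 := by
      rw [round_eq, Int.floor_eq_zero_iff]
      constructor <;> simp <;> linarith
    simp [distToInt, this, abs_of_nonneg h0]
  · subst h
    have : round (1/2 : ℝ) = 1 := by norm_num [round_eq]
    norm_num [distToInt, this]

lemma distToInt_eq_one_sub {x : ℝ} (h0 : 1/2 ≤ x) (h1 : x ≤ 1) : distToInt x = 1 - x := by
  have : round x = 1 := by
    rw [round_eq]
    have : (1 : ℤ) ≤ ⌊x + 1/2⌋ := by
      rw [Int.le_floor]; push_cast; linarith
    have h2 : ⌊x + 1/2⌋ < 2 := by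
      rw [Int.floor_lt]; push_cast; linarith
    omega
  rw [distToInt, this]
  push_cast
  rw [abs_of_nonpos (by linarith)]
  ring

/-- The ℝ≥0∞-valued integrand. -/
def Gfun (δ : ℝ) (x : ℝ) : ℝ≥0∞ :=
  ENNReal.ofReal ((distToInt x * |Real.log (distToInt x)| ^ ((1 : ℝ) + δ))⁻¹)

lemma measurable_Gfun (δ : ℝ) : Measurable (Gfun δ) := by
  apply ENNReal.measurable_ofReal.comp
  exact (measurable_distToInt.mul
    (((Real.measurable_log.comp measurable_distToInt).abs).pow_const _)).inv

lemma Gfun_add_int (δ : ℝ) (x : ℝ) (n : ℤ) : Gfun δ (x + n) = Gfun δ x := by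
  unfold Gfun; rw [distToInt_add_int]

/-- lintegral of `Gfun` over any interval `Ioc c (c+1)` equals that over `Ioc 0 1`. -/
lemma key1 (δ : ℝ) (c : ℝ) :
    ∫⁻ x in Ioc c (c + 1), Gfun δ x = ∫⁻ x in Ioc 0 1, Gfun δ x := by
  have h1 := isAddFundamentalDomain_Ioc one_pos c (μ := (volume : Measure ℝ))
  have h0 := isAddFundamentalDomain_Ioc one_pos 0 (μ := (volume : Measure ℝ))
  have := h1.setLIntegral_eq h0 (Gfun δ) ?_
  · simpa using this
  · rintro ⟨g, hg⟩ x
    obtain ⟨n, rfl⟩ := AddSubgroup.mem_zmultiples_iff.mp hg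
    show Gfun δ ((n • (1:ℝ)) + x) = Gfun δ x
    rw [add_comm]
    simpa using Gfun_add_int δ x n

lemma key2 (δ : ℝ) (c : ℝ) (k : ℕ) :
    ∫⁻ x in Ioc c (c + k), Gfun δ x = k * ∫⁻ x in Ioc 0 1, Gfun δ x := by
  induction k with
  | zero => simp
  | succ k ih =>
    have hsplit : Ioc c (c + (k + 1 : ℕ)) = Ioc c (c + k) ∪ Ioc (c + k) (c + k + 1) := by
      rw [Set.Ioc_union_Ioc_eq_Ioc (by linarith [Nat.cast_nonneg (α := ℝ) k]) (by linarith)]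
      push_cast; ring_nf
    rw [hsplit, lintegral_union measurableSet_Ioc, ih, key1 δ (c + k)]
    · push_cast; ring
    · rw [Set.Ioc_disjoint_Ioc]
      exact min_le_of_left_le (le_max_right _ _)

/-- 1-D lintegral change of variables. -/
lemma lintegral_image_abs_deriv {s : Set ℝ} {f : ℝ → ℝ} {f' : ℝ → ℝ}
    (hs : MeasurableSet s) (hf' : ∀ x ∈ s, HasDerivWithinAt f (f' x) s x)
    (hf : Set.InjOn f s) (g : ℝ → ℝ≥0∞) :
    ∫⁻ x in f '' s, g x = ∫⁻ x in s, ENNReal.ofReal |f' x| * g (f x) := by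
  simpa only [ContinuousLinearMap.det_toSpanSingleton] using
    lintegral_image_eq_lintegral_abs_det_fderiv_mul volume hs
      (fun x hx => (hf' x hx).hasFDerivWithinAt) hf g

lemma key4 (δ : ℝ) (k : ℤ) (hk : 1 ≤ k) (c : ℝ) :
    ∫⁻ t in Icc (0:ℝ) 1, Gfun δ ((k : ℝ) * t + c) = ∫⁻ x in Ioc 0 1, Gfun δ x := by
  have hk0 : (0 : ℝ) < (k : ℝ) := by exact_mod_cast hk
  rw [Measure.restrict_congr_set Ioc_ae_eq_Icc.symm]
  have himg : (fun t => (k : ℝ) * t + c) '' Ioc 0 1 = Ioc c (c + k) := by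
    rw [Set.image_affine_Ioc hk0]
    norm_num [add_comm]
  have hderiv : ∀ x ∈ Ioc (0:ℝ) 1,
      HasDerivWithinAt (fun t => (k : ℝ) * t + c) ((k : ℝ)) (Ioc 0 1) x := by
    intro x _
    simpa using (((hasDerivAt_id x).const_mul (k:ℝ)).add_const c).hasDerivWithinAt
  have hinj : Set.InjOn (fun t => (k : ℝ) * t + c) (Ioc 0 1) := by
    intro a _ b _ hab
    simp only at hab
    nlinarith [hab]
  have := lintegral_image_abs_deriv measurableSet_Ioc hderiv hinj (Gfun δ)
  have hkt : ((k.toNat : ℝ) : ℝ) = (k : ℝ) := by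
    exact_mod_cast congrArg (Int.cast : ℤ → ℝ) (Int.toNat_of_nonneg (by omega))
  rw [himg, show c + (k : ℝ) = c + (k.toNat : ℝ) by rw [hkt], key2 δ c k.toNat] at this
  -- this : k.toNat * ∫⁻ Ioc 0 1 = ∫⁻ t in Ioc 0 1, ofReal |k| * Gfun δ (k t + c)
  rw [lintegral_const_mul' _ _ ENNReal.ofReal_ne_top] at this
  have hcast : ((k.toNat : ℝ≥0∞)) = ENNReal.ofReal |(k : ℝ)| := by
    rw [abs_of_pos hk0, ← hkt, ENNReal.ofReal_natCast]
  rw [hcast] at this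
  have hne0 : ENNReal.ofReal |(k : ℝ)| ≠ 0 := by
    simp [ENNReal.ofReal_eq_zero, abs_of_pos hk0]
    linarith
  exact (ENNReal.mul_right_inj hne0 ENNReal.ofReal_ne_top).mp this |>.symm

lemma half1 (δ : ℝ) (hδ : 0 < δ) :
    ∫⁻ x in Ioc (0:ℝ) (1/2), Gfun δ x
      = ENNReal.ofReal (δ⁻¹ * Real.log 2 ^ (-δ)) := by
  have hl2 : (0:ℝ) < Real.log 2 := Real.log_pos one_lt_two
  have himg : (fun s : ℝ => Real.exp (-s)) '' Ici (Real.log 2) = Ioc 0 (1/2) := by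
    ext x
    constructor
    · rintro ⟨s, hs, rfl⟩
      refine ⟨Real.exp_pos _, ?_⟩
      calc Real.exp (-s) ≤ Real.exp (-(Real.log 2)) :=
            Real.exp_le_exp.mpr (neg_le_neg hs)
        _ = 1/2 := by rw [Real.exp_neg, Real.exp_log two_pos]; norm_num
    · rintro ⟨hx0, hx1⟩
      refine ⟨-Real.log x, ?_, by simp [Real.exp_log hx0]⟩
      have : Real.log x ≤ Real.log (1/2) := Real.log_le_log hx0 hx1
      rw [Real.log_div one_ne_zero two_ne_zero, Real.log_one] at this
      simp only [mem_Ici]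
      linarith
  have hderiv : ∀ x ∈ Ici (Real.log 2),
      HasDerivWithinAt (fun s : ℝ => Real.exp (-s)) (-Real.exp (-x)) (Ici (Real.log 2)) x := by
    intro x _
    have := (Real.hasDerivAt_exp (-x)).comp x ((hasDerivAt_id x).neg)
    simpa [mul_comm, Function.comp_def] using this.hasDerivWithinAt
  have hinj : Set.InjOn (fun s : ℝ => Real.exp (-s)) (Ici (Real.log 2)) := by
    intro a _ b _ hab
    simpa using Real.exp_injective hab
  rw [← himg, lintegral_image_abs_deriv measurableSet_Ici hderiv hinj (Gfun δ)]
  have hcong : ∫⁻ x in Ici (Real.log 2),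
      ENNReal.ofReal |(-Real.exp (-x))| * Gfun δ (Real.exp (-x))
      = ∫⁻ x in Ici (Real.log 2), ENNReal.ofReal (x ^ (-(1+δ))) := by
    apply setLIntegral_congr_fun measurableSet_Ici
    intro s hs
    beta_reduce
    have hs0 : 0 < s := lt_of_lt_of_le hl2 hs
    have hle : Real.exp (-s) ≤ 1/2 := by
      calc Real.exp (-s) ≤ Real.exp (-(Real.log 2)) := Real.exp_le_exp.mpr (neg_le_neg hs)
        _ = 1/2 := by rw [Real.exp_neg, Real.exp_log two_pos]; norm_num
    have hd : distToInt (Real.exp (-s)) = Real.exp (-s) :=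
      distToInt_eq_self (Real.exp_pos _).le hle
    rw [abs_neg, abs_of_pos (Real.exp_pos _)]
    unfold Gfun
    rw [hd, Real.log_exp, abs_neg, abs_of_pos hs0,
      ← ENNReal.ofReal_mul (Real.exp_pos _).le]
    congr 1
    rw [Real.rpow_neg hs0.le]
    field_simp
  rw [hcong, Measure.restrict_congr_set (Ioi_ae_eq_Ici (a := Real.log 2)).symm]
  have hint : IntegrableOn (fun x : ℝ => x ^ (-(1+δ))) (Ioi (Real.log 2)) :=
    integrableOn_Ioi_rpow_of_lt (by linarith) hl2
  rw [← ofReal_integral_eq_lintegral_ofReal hint]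
  · rw [integral_Ioi_rpow_of_lt (by linarith) hl2]
    congr 1
    rw [show -(1+δ) + 1 = -δ by ring]
    field_simp
  · filter_upwards [ae_restrict_mem measurableSet_Ioi] with x hx
    exact Real.rpow_nonneg (le_of_lt (lt_trans hl2 hx)) _

lemma half2 (δ : ℝ) :
    ∫⁻ x in Ioc (1/2 : ℝ) 1, Gfun δ x = ∫⁻ x in Ioc (0:ℝ) (1/2), Gfun δ x := by
  have himg : (fun x : ℝ => 1 - x) '' Ico 0 (1/2) = Ioc (1/2) 1 := by
    rw [show (fun x : ℝ => 1 - x) = (fun x : ℝ => (1:ℝ) - x) from rfl, Set.image_const_sub_Ico]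
    norm_num
  have hderiv : ∀ x ∈ Ico (0:ℝ) (1/2),
      HasDerivWithinAt (fun x : ℝ => 1 - x) (-1) (Ico 0 (1/2)) x := by
    intro x _
    simpa using ((hasDerivAt_id x).const_sub 1).hasDerivWithinAt
  have hinj : Set.InjOn (fun x : ℝ => 1 - x) (Ico 0 (1/2)) := by
    intro a _ b _ hab; simp only at hab; linarith
  rw [← himg, lintegral_image_abs_deriv measurableSet_Ico hderiv hinj (Gfun δ)]
  have hcong : ∫⁻ x in Ico (0:ℝ) (1/2), ENNReal.ofReal |(-1 : ℝ)| * Gfun δ (1 - x)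
      = ∫⁻ x in Ico (0:ℝ) (1/2), Gfun δ x := by
    apply setLIntegral_congr_fun measurableSet_Ico
    intro x hx
    obtain ⟨hx0, hx1⟩ := hx
    have h1 : distToInt (1 - x) = x := by
      rw [distToInt_eq_one_sub (by linarith) (by linarith)]; ring
    have h2 : distToInt x = x := distToInt_eq_self hx0 (by linarith)
    simp [Gfun, h1, h2]
  rw [hcong, Measure.restrict_congr_set Ico_ae_eq_Ioc]

lemma key5 (δ : ℝ) (hδ : 0 < δ) :
    ∫⁻ x in Ioc (0:ℝ) 1, Gfun δ x
      ≤ ENNReal.ofReal (2 * δ⁻¹ * Real.log 2 ^ (-δ)) := by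
  have hsplit : Ioc (0:ℝ) 1 = Ioc 0 (1/2) ∪ Ioc (1/2) 1 := by
    rw [Set.Ioc_union_Ioc_eq_Ioc] <;> norm_num
  rw [hsplit, lintegral_union measurableSet_Ioc, half1 δ hδ, half2 δ, half1 δ hδ,
    ← ENNReal.ofReal_add (by positivity) (by positivity)]
  · apply ENNReal.ofReal_le_ofReal
    apply le_of_eq
    ring
  · rw [Set.Ioc_disjoint_Ioc]
    exact min_le_of_left_le (le_max_right _ _)

lemma restrict_pi_icc (n : ℕ) :
    (volume : Measure (Fin n → ℝ)).restrict (Set.pi Set.univ fun _ => Icc (0:ℝ) 1)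
      = Measure.pi (fun _ : Fin n => (volume : Measure ℝ).restrict (Icc 0 1)) := by
  refine (Measure.pi_eq fun s hs => ?_).symm
  rw [Measure.restrict_apply (MeasurableSet.univ_pi hs), ← Set.pi_inter_distrib,
    volume_pi_pi]
  exact Finset.prod_congr rfl fun i _ => (Measure.restrict_apply (hs i)).symm

set_option maxHeartbeats 1000000 in
/-- integral estimate from the proof of Lemma 5 of the paper.
For `m ≥ 1`, `δ > 0` and `h ∈ ℤ^m` with all coordinates `h i ≥ 1`,
`∫_{[0,1]^m} (‖⟨h,β⟩‖ · |log ‖⟨h,β⟩‖|^{1+δ})⁻¹ dβ ≤ 2 m δ⁻¹ (log 2)^{-δ}`. -/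
theorem integral_bound (m : ℕ) (hm : 0 < m) (δ : ℝ) (hδ : 0 < δ)
    (h : Fin m → ℤ) (hh : ∀ i, 1 ≤ h i) :
    ∫ β in Set.pi Set.univ (fun _ : Fin m => Set.Icc (0 : ℝ) 1),
        (distToInt (∑ j, (h j : ℝ) * β j) *
          |Real.log (distToInt (∑ j, (h j : ℝ) * β j))| ^ ((1 : ℝ) + δ))⁻¹
      ≤ 2 * m * δ⁻¹ * Real.log 2 ^ (-δ) := by
  obtain ⟨n, rfl⟩ : ∃ n, m = n + 1 := ⟨m - 1, (Nat.succ_pred_eq_of_pos hm).symm⟩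
  have hL : (0:ℝ) ≤ Real.log 2 ^ (-δ) := Real.rpow_nonneg (Real.log_nonneg one_le_two) _
  have hRHS : (0:ℝ) ≤ 2 * ((n:ℝ) + 1) * δ⁻¹ * Real.log 2 ^ (-δ) := by positivity
  have hsum : Measurable fun β : Fin (n+1) → ℝ => ∑ j, (h j : ℝ) * β j :=
    Finset.univ.measurable_sum fun j _ => (measurable_pi_apply j).const_mul _
  have hFmeas : Measurable fun β : Fin (n+1) → ℝ =>
      (distToInt (∑ j, (h j : ℝ) * β j) *
        |Real.log (distToInt (∑ j, (h j : ℝ) * β j))| ^ ((1 : ℝ) + δ))⁻¹ :=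
    ((measurable_distToInt.comp hsum).mul
      (((Real.measurable_log.comp (measurable_distToInt.comp hsum)).abs).pow_const _)).inv
  have hnn : ∀ β : Fin (n+1) → ℝ,
      0 ≤ (distToInt (∑ j, (h j : ℝ) * β j) *
        |Real.log (distToInt (∑ j, (h j : ℝ) * β j))| ^ ((1 : ℝ) + δ))⁻¹ := fun β =>
    inv_nonneg.2 (mul_nonneg (distToInt_nonneg _) (Real.rpow_nonneg (abs_nonneg _) _))
  rw [integral_eq_lintegral_of_nonneg_ae (Filter.Eventually.of_forall hnn)
    hFmeas.aestronglyMeasurable]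
  have hcast : ((n:ℝ) + 1) = ((n+1 : ℕ) : ℝ) := by push_cast; ring
  rw [← hcast]
  apply ENNReal.toReal_le_of_le_ofReal hRHS
  have hrw : ∫⁻ β in Set.pi Set.univ (fun _ : Fin (n+1) => Set.Icc (0 : ℝ) 1),
      ENNReal.ofReal ((distToInt (∑ j, (h j : ℝ) * β j) *
        |Real.log (distToInt (∑ j, (h j : ℝ) * β j))| ^ ((1 : ℝ) + δ))⁻¹)
      = ∫⁻ β, Gfun δ (∑ j, (h j : ℝ) * β j)
          ∂(Measure.pi fun _ : Fin (n+1) => (volume : Measure ℝ).restrict (Icc 0 1)) := by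
    rw [restrict_pi_icc]
    rfl
  rw [hrw]
  set g : ℝ × (Fin n → ℝ) → ℝ≥0∞ := fun p =>
    Gfun δ ((h 0 : ℝ) * p.1 + ∑ j : Fin n, (h (Fin.succ j) : ℝ) * p.2 j) with hgdef
  have hg : Measurable g := (measurable_Gfun δ).comp
    ((measurable_fst.const_mul _).add
      (Finset.univ.measurable_sum fun j _ =>
        ((measurable_pi_apply j).comp measurable_snd).const_mul _))
  have hmp := measurePreserving_piFinSuccAbove
    (fun _ : Fin (n+1) => (volume : Measure ℝ).restrict (Icc 0 1)) 0
  have hcomp : ∀ β : Fin (n+1) → ℝ,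
      Gfun δ (∑ j, (h j : ℝ) * β j)
        = g (MeasurableEquiv.piFinSuccAbove (fun _ : Fin (n+1) => ℝ) 0 β) := by
    intro β
    have he : (MeasurableEquiv.piFinSuccAbove (fun _ : Fin (n+1) => ℝ) 0) β
        = (β 0, fun j => β j.succ) := rfl
    rw [he, hgdef, Fin.sum_univ_succ]
  calc ∫⁻ β, Gfun δ (∑ j, (h j : ℝ) * β j)
          ∂(Measure.pi fun _ : Fin (n+1) => (volume : Measure ℝ).restrict (Icc 0 1))
      = ∫⁻ β, g (MeasurableEquiv.piFinSuccAbove (fun _ : Fin (n+1) => ℝ) 0 β)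
          ∂(Measure.pi fun _ : Fin (n+1) => (volume : Measure ℝ).restrict (Icc 0 1)) :=
        lintegral_congr hcomp
    _ = ∫⁻ p, g p ∂(((volume : Measure ℝ).restrict (Icc 0 1)).prod
          (Measure.pi fun _ : Fin n => (volume : Measure ℝ).restrict (Icc 0 1))) :=
        hmp.lintegral_comp hg
    _ = ∫⁻ y, ∫⁻ t, g (t, y) ∂((volume : Measure ℝ).restrict (Icc 0 1))
          ∂(Measure.pi fun _ : Fin n => (volume : Measure ℝ).restrict (Icc 0 1)) :=
        lintegral_prod_symm g hg.aemeasurable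
    _ = ∫⁻ _y, (∫⁻ x in Ioc (0:ℝ) 1, Gfun δ x)
          ∂(Measure.pi fun _ : Fin n => (volume : Measure ℝ).restrict (Icc 0 1)) := by
        refine lintegral_congr fun y => ?_
        simp only [hgdef]
        exact key4 δ (h 0) (hh 0) _
    _ ≤ ENNReal.ofReal (2 * ((n:ℝ)+1) * δ⁻¹ * Real.log 2 ^ (-δ)) := by
        rw [lintegral_const]
        have hμuniv : (Measure.pi fun _ : Fin n =>
            (volume : Measure ℝ).restrict (Icc 0 1)) Set.univ = 1 := by
          rw [Measure.pi_univ]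
          simp [Real.volume_Icc]
        rw [hμuniv, mul_one]
        refine le_trans (key5 δ hδ) (ENNReal.ofReal_le_ofReal ?_)
        have h1 : (1:ℝ) ≤ (n:ℝ)+1 := by linarith [Nat.cast_nonneg (α := ℝ) n]
        nlinarith [inv_nonneg.2 hδ.le, hL]
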